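/- Let G be a graph of girth g ≥ 5 and X ⊆ V(G) with |X| = g−2, and let K_1,…,K_p be the components of G[X]. Then ∑_{{i,j}} |N_G(K_i) ∩ N_G(K_j)| ≤ C(p,2) if p ≥ 3, and ≤ 2p − 2 if p ∈ {1,2}, where the sum is over all unordered pairs {i,j} ⊆ [p]. -/

import Mathlib

open scoped Classical

variable {V : Type*}

/-- The external neighborhood of a set of vertices. -/
def extNbhd (G : SimpleGraph V) (X : Set V) : Set V :=
  {v | v ∉ X ∧ ∃ x ∈ X, G.Adj v x}

/-- The vertex set (in `V`) of a connected component of the induced subgraph `G[X]`. -/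
def compVerts (G : SimpleGraph V) (X : Set V)
    (C : (G.induce X).ConnectedComponent) : Set V :=
  {y | ∃ x : X, (G.induce X).connectedComponentMk x = C ∧ (x : V) = y}

/-- `w` has a neighbor in the component `C` of `G[X]`. -/
def touches (G : SimpleGraph V) (X : Set V) (w : V)
    (C : (G.induce X).ConnectedComponent) : Prop :=
  ∃ x : X, (G.induce X).connectedComponentMk x = C ∧ G.Adj w (x : V)

namespace StmtAux

open SimpleGraph

lemma mem_support_mk {W : Type*} {H : SimpleGraph W} {x y u : W} (P : H.Walk x y)
    (hu : u ∈ P.support) :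
    H.connectedComponentMk u = H.connectedComponentMk x :=
  (ConnectedComponent.sound (P.takeUntil u hu).reachable).symm

lemma exists_shortest {W : Type*} {H : SimpleGraph W} {x y : W}
    (h : H.connectedComponentMk x = H.connectedComponentMk y) :
    ∃ P : H.Walk x y, P.IsPath ∧ P.length = H.dist x y ∧
      ∀ u ∈ P.support, H.connectedComponentMk u = H.connectedComponentMk x := by
  obtain ⟨P, hP, hlen⟩ := (ConnectedComponent.exact h).exists_path_of_dist
  exact ⟨P, hP, hlen, fun u hu => mem_support_mk P hu⟩

lemma dist_add_one_le {W : Type*} [Fintype W] {H : SimpleGraph W} {x y : W}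
    {c : H.ConnectedComponent}
    (hx : H.connectedComponentMk x = c) (hy : H.connectedComponentMk y = c) :
    H.dist x y + 1 ≤ {u | H.connectedComponentMk u = c}.ncard := by
  obtain ⟨P, hP, hlen, hsupp⟩ := exists_shortest (hx.trans hy.symm)
  have h1 : P.support.toFinset.card = P.length + 1 := by
    rw [List.toFinset_card_of_nodup hP.support_nodup, Walk.length_support]
  have h2 : P.support.toFinset ⊆ {u | H.connectedComponentMk u = c}.toFinset := by
    intro u hu
    rw [List.mem_toFinset] at hu
    rw [Set.mem_toFinset]
    exact (hsupp u hu).trans hx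
  calc H.dist x y + 1 = P.support.toFinset.card := by rw [h1, hlen]
    _ ≤ {u | H.connectedComponentMk u = c}.toFinset.card := Finset.card_le_card h2
    _ = {u | H.connectedComponentMk u = c}.ncard := (Set.ncard_eq_toFinset_card' _).symm

lemma three_points {W : Type*} [Fintype W] {H : SimpleGraph W} {c : H.ConnectedComponent}
    {x1 x2 x3 : W} {n : ℕ}
    (h1 : H.connectedComponentMk x1 = c) (h2 : H.connectedComponentMk x2 = c)
    (h3 : H.connectedComponentMk x3 = c)
    (hn : {u | H.connectedComponentMk u = c}.ncard = n) (hn2 : 2 ≤ n)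
    (d12 : H.dist x1 x2 + 1 = n) (d13 : H.dist x1 x3 + 1 = n)
    (d32 : H.dist x3 x2 + 1 = n) : False := by
  obtain ⟨P, hP, hlen, hsupp⟩ := exists_shortest (h1.trans h2.symm)
  have hsub : P.support.toFinset ⊆ {u | H.connectedComponentMk u = c}.toFinset := by
    intro u hu
    rw [List.mem_toFinset] at hu
    rw [Set.mem_toFinset]
    exact (hsupp u hu).trans h1
  have hcard : P.support.toFinset.card = n := by
    rw [List.toFinset_card_of_nodup hP.support_nodup, Walk.length_support, hlen]
    omega
  have heq : P.support.toFinset = {u | H.connectedComponentMk u = c}.toFinset := by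
    refine Finset.eq_of_subset_of_card_le hsub ?_
    rw [hcard, ← Set.ncard_eq_toFinset_card', hn]
  have hx3 : x3 ∈ P.support := by
    have hm : x3 ∈ ({u | H.connectedComponentMk u = c} : Set W).toFinset := by
      rw [Set.mem_toFinset]; exact h3
    rw [← heq, List.mem_toFinset] at hm
    exact hm
  have hsplit : (P.takeUntil x3 hx3).length + (P.dropUntil x3 hx3).length = P.length := by
    rw [← Walk.length_append, Walk.take_spec]
  have l1 := SimpleGraph.dist_le (P.takeUntil x3 hx3)
  have l2 := SimpleGraph.dist_le (P.dropUntil x3 hx3)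
  omega

lemma compVerts_subset (G : SimpleGraph V) (X : Set V) (C) :
    compVerts G X C ⊆ X := by
  rintro v ⟨x, _, rfl⟩; exact x.2

lemma compVerts_disjoint {G : SimpleGraph V} {X : Set V}
    {C D : (G.induce X).ConnectedComponent} (hCD : C ≠ D) {v : V}
    (hC : v ∈ compVerts G X C) (hD : v ∈ compVerts G X D) : False := by
  obtain ⟨x, hx, rfl⟩ := hC
  obtain ⟨y, hy, hyx⟩ := hD
  apply hCD
  rw [← hx, ← hy, Subtype.coe_injective hyx]

lemma compVerts_eq_image (G : SimpleGraph V) (X : Set V) (C) :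
    compVerts G X C = Subtype.val '' {u : X | (G.induce X).connectedComponentMk u = C} := by
  ext v
  constructor
  · rintro ⟨x, hx, rfl⟩; exact ⟨x, hx, rfl⟩
  · rintro ⟨x, hx, rfl⟩; exact ⟨x, hx, rfl⟩

lemma ncard_compVerts (G : SimpleGraph V) (X : Set V) (C) :
    (compVerts G X C).ncard = {u : X | (G.induce X).connectedComponentMk u = C}.ncard := by
  rw [compVerts_eq_image, Set.ncard_image_of_injective _ Subtype.coe_injective]

lemma compVerts_nonempty (G : SimpleGraph V) (X : Set V) (C) :
    (compVerts G X C).Nonempty := by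
  obtain ⟨x, hx⟩ := Quot.exists_rep C
  exact ⟨x, x, hx, rfl⟩

lemma extNbhd_elim {G : SimpleGraph V} {X : Set V} {C : (G.induce X).ConnectedComponent}
    {w : V} (hw : w ∈ extNbhd G (compVerts G X C)) :
    ∃ a : X, (G.induce X).connectedComponentMk a = C ∧ G.Adj w (a : V) := by
  obtain ⟨hnot, x, hx, hadj⟩ := hw
  obtain ⟨a, haC, rfl⟩ := hx
  exact ⟨a, haC, hadj⟩

lemma extNbhd_not_mem_X {G : SimpleGraph V} {X : Set V} {C : (G.induce X).ConnectedComponent}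
    {w : V} (hw : w ∈ extNbhd G (compVerts G X C)) : w ∉ X := by
  obtain ⟨hnot, x, hx, hadj⟩ := hw
  intro hwX
  obtain ⟨a, haC, rfl⟩ := hx
  refine hnot ⟨⟨w, hwX⟩, ?_, rfl⟩
  rw [← haC]
  exact SimpleGraph.ConnectedComponent.connectedComponentMk_eq_of_adj (by simpa using hadj)

lemma cycle_bound {G : SimpleGraph V} {g : ℕ}
    (hg : G.girth = (g : ℕ∞)) (hg5 : 5 ≤ g) {X : Set V}
    {C D : (G.induce X).ConnectedComponent} (hCD : C ≠ D)
    {w1 w2 : V} (hw : w1 ≠ w2) (hw1X : w1 ∉ X) (hw2X : w2 ∉ X)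
    {a1 a2 b1 b2 : X}
    (ha1 : (G.induce X).connectedComponentMk a1 = C)
    (ha2 : (G.induce X).connectedComponentMk a2 = C)
    (hb1 : (G.induce X).connectedComponentMk b1 = D)
    (hb2 : (G.induce X).connectedComponentMk b2 = D)
    (hwa1 : G.Adj w1 a1) (hwa2 : G.Adj w2 a2)
    (hwb1 : G.Adj w1 b1) (hwb2 : G.Adj w2 b2) :
    g ≤ (G.induce X).dist a1 a2 + (G.induce X).dist b1 b2 + 4 := by
  obtain ⟨P, hP, hPlen, hPsupp⟩ := exists_shortest (ha1.trans ha2.symm)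
  obtain ⟨Q, hQ, hQlen, hQsupp⟩ := exists_shortest (hb1.trans hb2.symm)
  have hfinj : Function.Injective (SimpleGraph.Embedding.induce (G := G) X) :=
    (SimpleGraph.Embedding.induce (G := G) X).injective
  let P' : G.Walk (a1 : V) (a2 : V) := P.map (SimpleGraph.Embedding.induce (G := G) X).toHom
  let Q' : G.Walk (b1 : V) (b2 : V) := Q.map (SimpleGraph.Embedding.induce (G := G) X).toHom
  have hPs : ∀ v ∈ P'.support, v ∈ compVerts G X C := by
    intro v hv
    rw [show P'.support = P.support.map _ from Walk.support_map _ _, List.mem_map] at hv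
    obtain ⟨u, hu, rfl⟩ := hv
    exact ⟨u, (hPsupp u hu).trans ha1, rfl⟩
  have hQs : ∀ v ∈ Q'.support, v ∈ compVerts G X D := by
    intro v hv
    rw [show Q'.support = Q.support.map _ from Walk.support_map _ _, List.mem_map] at hv
    obtain ⟨u, hu, rfl⟩ := hv
    exact ⟨u, (hQsupp u hu).trans hb1, rfl⟩
  have hQs' : ∀ v ∈ Q'.reverse.support, v ∈ compVerts G X D := by
    intro v hv
    rw [Walk.support_reverse, List.mem_reverse] at hv
    exact hQs v hv
  let W2 : G.Walk (b2 : V) w1 := Q'.reverse.append (Walk.cons hwb1.symm Walk.nil)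
  let Wr : G.Walk (a2 : V) w1 := Walk.cons hwa2.symm (Walk.cons hwb2 W2)
  let rest : G.Walk (a1 : V) w1 := P'.append Wr
  have hrs : rest.support = P'.support ++ (w2 :: (Q'.reverse.support ++ [w1])) := by
    simp [rest, Wr, W2, Walk.support_append, Walk.support_cons]
  have hP'path : P'.IsPath := Walk.map_isPath_of_injective hfinj hP
  have hQ'path : Q'.IsPath := Walk.map_isPath_of_injective hfinj hQ
  have hQnd : Q'.reverse.support.Nodup := by
    rw [Walk.support_reverse]
    exact List.nodup_reverse.mpr hQ'path.support_nodup
  have hrest : rest.IsPath := by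
    rw [Walk.isPath_def, hrs, List.nodup_append]
    refine ⟨hP'path.support_nodup, ?_, ?_⟩
    · rw [List.nodup_cons]
      constructor
      · intro h
        rcases List.mem_append.1 h with h | h
        · exact hw2X (compVerts_subset G X D (hQs' _ h))
        · rw [List.mem_singleton] at h
          exact hw h.symm
      · rw [List.nodup_append]
        refine ⟨hQnd, List.nodup_singleton _, ?_⟩
        intro v hv b hb hvb
        rw [List.mem_singleton] at hb
        rw [hvb, hb] at hv
        exact hw1X (compVerts_subset G X D (hQs' _ hv))
    · intro v hvA b hv2 hvb
      subst hvb
      rcases List.mem_cons.1 hv2 with rfl | hv2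
      · exact hw2X (compVerts_subset G X C (hPs _ hvA))
      · rcases List.mem_append.1 hv2 with h | h
        · exact compVerts_disjoint hCD (hPs _ hvA) (hQs' _ h)
        · rw [List.mem_singleton] at h
          subst h
          exact hw1X (compVerts_subset G X C (hPs _ hvA))
  have hedge : s(w1, (a1 : V)) ∉ rest.edges := by
    intro h
    have hre : rest.edges
        = P'.edges ++ (s((a2 : V), w2) :: s(w2, (b2 : V)) ::
            (Q'.reverse.edges ++ [s((b1 : V), w1)])) := by
      simp [rest, Wr, W2, Walk.edges_append, Walk.edges_cons]
    rw [hre] at h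
    rcases List.mem_append.1 h with h | h
    · exact hw1X (compVerts_subset G X C
        (hPs _ (Walk.fst_mem_support_of_mem_edges P' h)))
    · rcases List.mem_cons.1 h with h | h
      · rw [Sym2.eq_iff] at h
        rcases h with ⟨h1, h2⟩ | ⟨h1, h2⟩
        · exact hw1X (h1 ▸ a2.2)
        · exact hw h1
      · rcases List.mem_cons.1 h with h | h
        · rw [Sym2.eq_iff] at h
          rcases h with ⟨h1, h2⟩ | ⟨h1, h2⟩
          · exact hw h1
          · exact hw1X (h1 ▸ b2.2)
        · rcases List.mem_append.1 h with h | h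
          · exact hw1X (compVerts_subset G X D
              (hQs' _ (Walk.fst_mem_support_of_mem_edges Q'.reverse h)))
          · rw [List.mem_singleton, Sym2.eq_iff] at h
            rcases h with ⟨h1, h2⟩ | ⟨h1, h2⟩
            · exact hw1X (h1 ▸ b1.2)
            · exact hCD (ha1.symm.trans ((congrArg _ (Subtype.coe_injective h2) :
                (G.induce X).connectedComponentMk a1
                  = (G.induce X).connectedComponentMk b1).trans hb1))
  let cyc : G.Walk w1 w1 := Walk.cons hwa1 rest
  have hcyc : cyc.IsCycle := (Walk.cons_isCycle_iff rest hwa1).2 ⟨hrest, hedge⟩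
  have hga : ¬ G.IsAcyclic := fun ha => ha _ hcyc
  have hge : G.egirth = (g : ℕ∞) := by
    have h' : ((G.egirth.toNat : ℕ) : ℕ∞) = (g : ℕ∞) := hg
    rwa [ENat.coe_toNat (by
      rw [Ne, SimpleGraph.egirth_eq_top]; exact hga)] at h'
  have hle : G.egirth ≤ (cyc.length : ℕ∞) :=
    SimpleGraph.le_egirth.mp le_rfl w1 cyc hcyc
  rw [hge] at hle
  have hlen : cyc.length = P.length + Q.length + 4 := by
    have e1 : rest.length = P'.length + Wr.length := Walk.length_append _ _
    have e2 : W2.length = Q'.reverse.length + 1 := Walk.length_append _ _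
    have e3 : P'.length = P.length := Walk.length_map _ _
    have e4 : Q'.reverse.length = Q.length := (Walk.length_reverse _).trans (Walk.length_map _ _)
    have e5 : cyc.length = rest.length + 1 := rfl
    have e6 : Wr.length = W2.length + 2 := rfl
    omega
  have hfin : g ≤ cyc.length := Nat.cast_le.mp hle
  rw [hlen, hPlen, hQlen] at hfin
  omega

lemma sum_range_ite (n j : ℕ) (hj : j ≤ n) :
    (∑ i ∈ Finset.range n, if i < j then (1 : ℕ) else 0) = j := by
  have hfil : (Finset.range n).filter (fun i => i < j) = Finset.range j := by
    ext a; simp only [Finset.mem_filter, Finset.mem_range]; omega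
  rw [Finset.sum_boole, hfil, Finset.card_range]
  simp

lemma count_pairs (p : ℕ) :
    (∑ i : Fin p, ∑ j : Fin p, if i < j then (1 : ℕ) else 0) = p.choose 2 := by
  rw [Finset.sum_comm]
  have h1 : ∀ j : Fin p, (∑ i : Fin p, if i < j then (1 : ℕ) else 0) = j.val := by
    intro j
    calc (∑ i : Fin p, if i < j then (1 : ℕ) else 0)
        = ∑ i : Fin p, (if (i : ℕ) < (j : ℕ) then (1 : ℕ) else 0) :=
          Finset.sum_congr rfl (fun i _ => if_congr Fin.lt_def rfl rfl)
      _ = ∑ i ∈ Finset.range p, (if i < (j : ℕ) then (1 : ℕ) else 0) :=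
          Fin.sum_univ_eq_sum_range (fun m => if m < (j : ℕ) then (1 : ℕ) else 0) p
      _ = j.val := sum_range_ite p j.val j.2.le
  rw [Finset.sum_congr rfl (fun j _ => h1 j)]
  rw [Fin.sum_univ_eq_sum_range (fun m => m) p]
  have h2 := Finset.sum_range_id_mul_two p
  rw [Nat.choose_two_right]
  omega

end StmtAux

open StmtAux in
/-- If `G` has girth `g ≥ 5`, `|X| = g - 2`, and `K 1, …, K p` are the vertex
sets of the components of `G[X]`, then the sum over unordered pairs `{i,j}` of
`|N_G(K i) ∩ N_G(K j)|` is at most `C(p,2)` for `p ≥ 3` and at most `2p - 2`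
for `p ∈ {1, 2}`. -/
theorem stmt_10 [Fintype V] (G : SimpleGraph V) (g : ℕ)
    (hg : G.girth = (g : ℕ∞)) (hg5 : 5 ≤ g)
    (X : Set V) (hX : X.ncard = g - 2)
    (p : ℕ) (K : Fin p → Set V)
    (hK : ∀ i, ∃ C : (G.induce X).ConnectedComponent, K i = compVerts G X C)
    (hKinj : Function.Injective K)
    (hKsurj : ∀ C : (G.induce X).ConnectedComponent, ∃ i, K i = compVerts G X C) :
    (3 ≤ p →
      (∑ i : Fin p, ∑ j : Fin p,
        if i < j then (extNbhd G (K i) ∩ extNbhd G (K j)).ncard else 0) ≤ p.choose 2) ∧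
    (p = 1 ∨ p = 2 →
      (∑ i : Fin p, ∑ j : Fin p,
        if i < j then (extNbhd G (K i) ∩ extNbhd G (K j)).ncard else 0) ≤ 2 * p - 2) := by
  constructor
  · intro hp3
    have key : ∀ i j : Fin p, i ≠ j →
        (extNbhd G (K i) ∩ extNbhd G (K j)).ncard ≤ 1 := by
      intro i j hij
      obtain ⟨C, hC⟩ := hK i
      obtain ⟨D, hD⟩ := hK j
      have hCD : C ≠ D := fun h => hij (hKinj (by rw [hC, hD, h]))
      obtain ⟨l, hli, hlj⟩ : ∃ l : Fin p, l ≠ i ∧ l ≠ j := by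
        by_contra hcon
        push_neg at hcon
        have hsub : (Finset.univ : Finset (Fin p)) ⊆ {i, j} := by
          intro l _
          by_cases h : l = i
          · simp [h]
          · simp [hcon l h]
        have hle := Finset.card_le_card hsub
        have h2 : ({i, j} : Finset (Fin p)).card ≤ 2 := by
          refine le_trans (Finset.card_insert_le _ _) ?_
          simp
        rw [Finset.card_univ, Fintype.card_fin] at hle
        omega
      obtain ⟨E, hE⟩ := hK l
      have hEC : E ≠ C := fun h => hli (hKinj (by rw [hE, hC, h]))
      have hED : E ≠ D := fun h => hlj (hKinj (by rw [hE, hD, h]))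
      have hdisjCD : Disjoint (compVerts G X C) (compVerts G X D) :=
        Set.disjoint_left.mpr fun {v} hv hv' => (compVerts_disjoint hCD hv hv').elim
      have hdisjE : Disjoint (compVerts G X C ∪ compVerts G X D) (compVerts G X E) := by
        rw [Set.disjoint_union_left]
        constructor
        · exact Set.disjoint_left.mpr fun {v} hv hv' =>
            (compVerts_disjoint hEC hv' hv).elim
        · exact Set.disjoint_left.mpr fun {v} hv hv' =>
            (compVerts_disjoint hED hv' hv).elim
      have hsub3 : compVerts G X C ∪ compVerts G X D ∪ compVerts G X E ⊆ X :=
        Set.union_subset (Set.union_subset (compVerts_subset G X C)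
          (compVerts_subset G X D)) (compVerts_subset G X E)
      have hcard : (compVerts G X C).ncard + (compVerts G X D).ncard
          + (compVerts G X E).ncard ≤ g - 2 := by
        rw [← hX]
        calc (compVerts G X C).ncard + (compVerts G X D).ncard + (compVerts G X E).ncard
            = (compVerts G X C ∪ compVerts G X D ∪ compVerts G X E).ncard := by
              rw [Set.ncard_union_eq hdisjE (Set.toFinite _) (Set.toFinite _),
                Set.ncard_union_eq hdisjCD (Set.toFinite _) (Set.toFinite _)]
          _ ≤ X.ncard := Set.ncard_le_ncard hsub3 X.toFinite
      have hEpos : 0 < (compVerts G X E).ncard :=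
        (Set.ncard_pos (Set.toFinite _)).mpr (compVerts_nonempty G X E)
      rw [hC, hD, Set.ncard_le_one_iff (Set.toFinite _)]
      intro w1 w2 hw1 hw2
      by_contra hne
      obtain ⟨hw1C, hw1D⟩ := hw1
      obtain ⟨hw2C, hw2D⟩ := hw2
      obtain ⟨A1, hA1, hadjA1⟩ := extNbhd_elim hw1C
      obtain ⟨A2, hA2, hadjA2⟩ := extNbhd_elim hw2C
      obtain ⟨B1, hB1, hadjB1⟩ := extNbhd_elim hw1D
      obtain ⟨B2, hB2, hadjB2⟩ := extNbhd_elim hw2D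
      have h1X := extNbhd_not_mem_X hw1C
      have h2X := extNbhd_not_mem_X hw2C
      have hcyc := cycle_bound hg hg5 hCD hne h1X h2X hA1 hA2 hB1 hB2
        hadjA1 hadjA2 hadjB1 hadjB2
      have hdA := dist_add_one_le hA1 hA2
      have hdB := dist_add_one_le hB1 hB2
      rw [← ncard_compVerts] at hdA hdB
      omega
    calc (∑ i : Fin p, ∑ j : Fin p,
          if i < j then (extNbhd G (K i) ∩ extNbhd G (K j)).ncard else 0)
        ≤ ∑ i : Fin p, ∑ j : Fin p, (if i < j then (1 : ℕ) else 0) := by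
          refine Finset.sum_le_sum fun i _ => Finset.sum_le_sum fun j _ => ?_
          by_cases h : i < j
          · simp only [if_pos h]
            exact key i j h.ne
          · simp [h]
      _ = p.choose 2 := count_pairs p
  · rintro (rfl | rfl)
    · simp
    · obtain ⟨C, hC⟩ := hK 0
      obtain ⟨D, hD⟩ := hK 1
      have hCD : C ≠ D := fun h => by
        have h01 : (0 : Fin 2) = 1 := hKinj (by rw [hC, hD, h])
        exact absurd h01 (by decide)
      have hsum_eq : (∑ i : Fin 2, ∑ j : Fin 2,
          if i < j then (extNbhd G (K i) ∩ extNbhd G (K j)).ncard else 0)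
          = (extNbhd G (K 0) ∩ extNbhd G (K 1)).ncard := by
        rw [Fin.sum_univ_two, Fin.sum_univ_two, Fin.sum_univ_two]
        rw [if_neg (by decide), if_pos (by decide), if_neg (by decide), if_neg (by decide)]
        omega
      rw [hsum_eq]
      have hcover : compVerts G X C ∪ compVerts G X D = X := by
        apply Set.Subset.antisymm
        · exact Set.union_subset (compVerts_subset G X C) (compVerts_subset G X D)
        · intro x hx
          obtain ⟨i, hi⟩ := hKsurj ((G.induce X).connectedComponentMk ⟨x, hx⟩)
          have hxmem : x ∈ compVerts G X ((G.induce X).connectedComponentMk ⟨x, hx⟩) :=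
            ⟨⟨x, hx⟩, rfl, rfl⟩
          rw [← hi] at hxmem
          have hor : K i = K 0 ∨ K i = K 1 := by
            rcases i with ⟨iv, hiv⟩
            interval_cases iv
            · exact Or.inl rfl
            · exact Or.inr rfl
          rcases hor with h | h
          · rw [h, hC] at hxmem; exact Or.inl hxmem
          · rw [h, hD] at hxmem; exact Or.inr hxmem
      have hdisjCD : Disjoint (compVerts G X C) (compVerts G X D) :=
        Set.disjoint_left.mpr fun {v} hv hv' => (compVerts_disjoint hCD hv hv').elim
      have hsum : (compVerts G X C).ncard + (compVerts G X D).ncard = g - 2 := by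
        have h := Set.ncard_union_eq hdisjCD (Set.toFinite _) (Set.toFinite _)
        rw [hcover] at h
        rw [← hX]
        exact h.symm
      rw [hC, hD]
      show (extNbhd G (compVerts G X C) ∩ extNbhd G (compVerts G X D)).ncard ≤ 2 * 2 - 2
      by_contra hgt
      push_neg at hgt
      have hgt' : 2 < (extNbhd G (compVerts G X C) ∩ extNbhd G (compVerts G X D)).ncard := by
        omega
      have htf : 2 < (extNbhd G (compVerts G X C)
          ∩ extNbhd G (compVerts G X D)).toFinset.card := by
        rwa [← Set.ncard_eq_toFinset_card']
      obtain ⟨w1, w2, w3, hw1, hw2, hw3, h12, h13, h23⟩ := Finset.two_lt_card_iff.mp htf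
      rw [Set.mem_toFinset] at hw1 hw2 hw3
      obtain ⟨hw1C, hw1D⟩ := hw1
      obtain ⟨hw2C, hw2D⟩ := hw2
      obtain ⟨hw3C, hw3D⟩ := hw3
      obtain ⟨A1, hA1, hadjA1⟩ := extNbhd_elim hw1C
      obtain ⟨A2, hA2, hadjA2⟩ := extNbhd_elim hw2C
      obtain ⟨A3, hA3, hadjA3⟩ := extNbhd_elim hw3C
      obtain ⟨B1, hB1, hadjB1⟩ := extNbhd_elim hw1D
      obtain ⟨B2, hB2, hadjB2⟩ := extNbhd_elim hw2D
      obtain ⟨B3, hB3, hadjB3⟩ := extNbhd_elim hw3D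
      have h1X := extNbhd_not_mem_X hw1C
      have h2X := extNbhd_not_mem_X hw2C
      have h3X := extNbhd_not_mem_X hw3C
      have g12 := cycle_bound hg hg5 hCD h12 h1X h2X hA1 hA2 hB1 hB2
        hadjA1 hadjA2 hadjB1 hadjB2
      have g13 := cycle_bound hg hg5 hCD h13 h1X h3X hA1 hA3 hB1 hB3
        hadjA1 hadjA3 hadjB1 hadjB3
      have g32 := cycle_bound hg hg5 hCD (Ne.symm h23) h3X h2X hA3 hA2 hB3 hB2
        hadjA3 hadjA2 hadjB3 hadjB2
      have dA12 := dist_add_one_le hA1 hA2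
      have dA13 := dist_add_one_le hA1 hA3
      have dA32 := dist_add_one_le hA3 hA2
      have dB12 := dist_add_one_le hB1 hB2
      have dB13 := dist_add_one_le hB1 hB3
      have dB32 := dist_add_one_le hB3 hB2
      rw [← ncard_compVerts] at dA12 dA13 dA32 dB12 dB13 dB32
      have hor : 2 ≤ (compVerts G X C).ncard ∨ 2 ≤ (compVerts G X D).ncard := by omega
      rcases hor with h2C | h2D
      · exact three_points hA1 hA2 hA3 (ncard_compVerts G X C).symm h2C
          (by omega) (by omega) (by omega)
      · exact three_points hB1 hB2 hB3 (ncard_compVerts G X D).symm h2D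
          (by omega) (by omega) (by omega)
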